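/- For every integer ℓ ≥ 1, the function g_ℓ defined by g_ℓ(x,y) = x₁ + y₁ + Σ_{i=2}^{ℓ} x_i·y_i (mod 2) satisfies disc(g_ℓ) ≤ 2^{−(ℓ+3)/2}. -/

import Mathlib

/-- The gadget `g_ℓ(x,y) = x₁ + y₁ + Σ_{i=2}^{ℓ} x_i·y_i (mod 2)` (coordinates
indexed by `Fin ℓ`, with `x₁` corresponding to index `0`). -/
def gl (ℓ : ℕ) (hℓ : 0 < ℓ) (x y : Fin ℓ → Bool) : Bool :=
  decide ((((x ⟨0, hℓ⟩).toNat + (y ⟨0, hℓ⟩).toNat +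
    ∑ i ∈ Finset.univ.filter (fun i : Fin ℓ => 1 ≤ (i : ℕ)),
      (x i).toNat * (y i).toNat) % 2) = 1)

/-- The discrepancy of `g` (with respect to the uniform distribution) on the
combinatorial rectangle `A × B`. -/
noncomputable def discR {Λ : Type*} [Fintype Λ] [DecidableEq Λ] (g : Λ → Λ → Bool)
    (A B : Finset Λ) : ℝ :=
  |((((A ×ˢ B).filter fun p => g p.1 p.2 = false).card : ℝ) -
      (((A ×ˢ B).filter fun p => g p.1 p.2 = true).card : ℝ))| /
    ((Fintype.card Λ : ℝ) * (Fintype.card Λ : ℝ))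

open Finset

namespace Stmt8Aux

variable (ℓ : ℕ) (hℓ : 0 < ℓ)

noncomputable def χ (x y : Fin ℓ → Bool) : ℝ :=
  ∏ i : Fin ℓ, (if 1 ≤ (i : ℕ) ∧ x i = true ∧ y i = true then (-1 : ℝ) else 1)

def D : Finset (Fin ℓ → Bool) := univ.filter fun x => x ⟨0, hℓ⟩ = false

noncomputable def G (C : Finset (Fin ℓ → Bool)) (w : Fin ℓ → Bool) : ℝ :=
  (if Function.update w ⟨0, hℓ⟩ false ∈ C then (1 : ℝ) else 0) -
    (if Function.update w ⟨0, hℓ⟩ true ∈ C then (1 : ℝ) else 0)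

noncomputable def hfun (y z : Fin ℓ → Bool) (i : Fin ℓ) (b : Bool) : ℝ :=
  (if (i : ℕ) = 0 ∧ b = true then 0 else 1) *
    ((if 1 ≤ (i : ℕ) ∧ b = true ∧ y i = true then (-1 : ℝ) else 1) *
     (if 1 ≤ (i : ℕ) ∧ b = true ∧ z i = true then (-1 : ℝ) else 1))

lemma χ_update_right (x y : Fin ℓ → Bool) (b : Bool) :
    χ ℓ x (Function.update y ⟨0, hℓ⟩ b) = χ ℓ x y := by
  refine Finset.prod_congr rfl fun i _ => ?_
  by_cases h : i = ⟨0, hℓ⟩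
  · subst h; simp
  · rw [Function.update_of_ne h]

lemma χ_update_left (x y : Fin ℓ → Bool) (b : Bool) :
    χ ℓ (Function.update x ⟨0, hℓ⟩ b) y = χ ℓ x y := by
  refine Finset.prod_congr rfl fun i _ => ?_
  by_cases h : i = ⟨0, hℓ⟩
  · subst h; simp
  · rw [Function.update_of_ne h]

include hℓ in
lemma card_filter_ne : (univ.filter fun i : Fin ℓ => ¬ (i : ℕ) = 0).card = ℓ - 1 := by
  have h1 : (univ.filter fun i : Fin ℓ => (i : ℕ) = 0) = {(⟨0, hℓ⟩ : Fin ℓ)} := by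
    ext i; simp [Fin.ext_iff]
  have h2 := Finset.card_filter_add_card_filter_not
    (s := (univ : Finset (Fin ℓ))) (p := fun i : Fin ℓ => (i : ℕ) = 0)
  rw [h1] at h2
  simp at h2
  omega

/-- orthogonality over D -/
lemma orth (y z : Fin ℓ → Bool) :
    ∑ x ∈ D ℓ hℓ, χ ℓ x y * χ ℓ x z =
      if ∀ i : Fin ℓ, 1 ≤ (i : ℕ) → y i = z i then (2 : ℝ) ^ (ℓ - 1) else 0 := by
  classical
  have key : ∑ x ∈ D ℓ hℓ, χ ℓ x y * χ ℓ x z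
      = ∑ x : Fin ℓ → Bool, ∏ i : Fin ℓ, hfun ℓ y z i (x i) := by
    rw [D, Finset.sum_filter]
    refine Finset.sum_congr rfl fun x _ => ?_
    have hprod : ∏ i : Fin ℓ, (if (i : ℕ) = 0 ∧ x i = true then (0:ℝ) else 1)
        = if x ⟨0, hℓ⟩ = true then 0 else 1 := by
      rw [Finset.prod_eq_single (⟨0, hℓ⟩ : Fin ℓ)]
      · simp
      · intro i _ hne
        have : ¬ (i : ℕ) = 0 := fun hc => hne (Fin.ext hc)
        simp [this]
      · simp
    have heq : ∏ i : Fin ℓ, hfun ℓ y z i (x i)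
        = (if x ⟨0, hℓ⟩ = true then (0:ℝ) else 1) * (χ ℓ x y * χ ℓ x z) := by
      unfold hfun χ
      rw [Finset.prod_mul_distrib, hprod, Finset.prod_mul_distrib]
    rw [heq]
    by_cases hx : x ⟨0, hℓ⟩ = false
    · simp [hx]
    · simp only [Bool.not_eq_false] at hx
      simp [hx]
  rw [key, ← Fintype.piFinset_univ, ← Finset.prod_univ_sum]
  have factor : ∀ i : Fin ℓ, ∑ b : Bool, hfun ℓ y z i b
      = hfun ℓ y z i true + hfun ℓ y z i false := fun i => by
    rw [Fintype.sum_bool]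
  by_cases hc : ∀ i : Fin ℓ, 1 ≤ (i : ℕ) → y i = z i
  · rw [if_pos hc]
    have hval : ∀ i : Fin ℓ, ∑ b : Bool, hfun ℓ y z i b
        = if (i : ℕ) = 0 then 1 else 2 := by
      intro i
      rw [factor]
      unfold hfun
      by_cases h0 : (i : ℕ) = 0
      · have hn : ¬ 1 ≤ (i : ℕ) := by omega
        simp [h0, hn]
      · have h1 : 1 ≤ (i : ℕ) := by omega
        have := hc i h1
        cases hy : y i <;> cases hz : z i <;> simp_all [h0, h1] <;> norm_num
    rw [Finset.prod_congr rfl fun i _ => hval i, Finset.prod_ite, Finset.prod_const,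
      Finset.prod_const, card_filter_ne ℓ hℓ]
    simp
  · rw [if_neg hc]
    push_neg at hc
    obtain ⟨j, hj1, hjne⟩ := hc
    refine Finset.prod_eq_zero (Finset.mem_univ j) ?_
    rw [Fintype.sum_bool]
    unfold hfun
    have h0 : ¬ (j : ℕ) = 0 := by omega
    cases hy : y j <;> cases hz : z j <;> simp_all [h0, hj1] <;> norm_num

end Stmt8Aux

namespace Stmt8Aux

open Finset

variable (ℓ : ℕ) (hℓ : 0 < ℓ)

noncomputable def s (x : Fin ℓ → Bool) : ℝ := (-1 : ℝ) ^ (x ⟨0, hℓ⟩).toNat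

lemma two_card_D : 2 * (D ℓ hℓ).card = 2 ^ ℓ := by
  classical
  have hcard : ((univ : Finset (Fin ℓ → Bool)).filter fun x => x ⟨0, hℓ⟩ = false).card
      + ((univ : Finset (Fin ℓ → Bool)).filter fun x => ¬ x ⟨0, hℓ⟩ = false).card
      = 2 ^ ℓ := by
    rw [Finset.card_filter_add_card_filter_not]
    simp [Fintype.card_fun]
  have hbij : ((univ : Finset (Fin ℓ → Bool)).filter fun x => ¬ x ⟨0, hℓ⟩ = false).card
      = (D ℓ hℓ).card := by
    refine Finset.card_nbij' (fun x => Function.update x ⟨0, hℓ⟩ false)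
      (fun x => Function.update x ⟨0, hℓ⟩ true) ?_ ?_ ?_ ?_
    · intro a ha; simp [D]
    · intro a ha; simp
    · intro a ha
      simp only [Finset.mem_coe, Finset.mem_filter, Bool.not_eq_false] at ha
      rw [← ha.2]; simp
    · intro a ha
      simp only [D, Finset.mem_coe, Finset.mem_filter] at ha
      rw [← ha.2]; simp
  rw [hbij] at hcard
  have h3 : (D ℓ hℓ).card + (D ℓ hℓ).card = 2 ^ ℓ := hcard
  rw [two_mul]
  exact h3

lemma collapse (C : Finset (Fin ℓ → Bool)) (F : (Fin ℓ → Bool) → ℝ)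
    (hF : ∀ x b, F (Function.update x ⟨0, hℓ⟩ b) = F x) :
    ∑ y ∈ C, s ℓ hℓ y * F y = ∑ w ∈ D ℓ hℓ, G ℓ hℓ C w * F w := by
  classical
  have hC : ∑ y ∈ C, s ℓ hℓ y * F y = ∑ x ∈ univ, (if x ∈ C then s ℓ hℓ x * F x else 0) := by
    rw [Finset.sum_ite_mem, Finset.univ_inter]
  rw [hC, ← Finset.sum_filter_add_sum_filter_not univ (fun x => x ⟨0, hℓ⟩ = false)]
  have h2 : ∑ x ∈ univ.filter (fun x => ¬ x ⟨0, hℓ⟩ = false),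
      (if x ∈ C then s ℓ hℓ x * F x else 0)
      = ∑ w ∈ D ℓ hℓ, (if Function.update w ⟨0, hℓ⟩ true ∈ C then -F w else 0) := by
    refine Finset.sum_nbij' (fun x => Function.update x ⟨0, hℓ⟩ false)
      (fun x => Function.update x ⟨0, hℓ⟩ true) ?_ ?_ ?_ ?_ ?_
    · intro a ha; simp [D]
    · intro a ha; simp
    · intro a ha
      simp only [Finset.mem_filter, Bool.not_eq_false] at ha
      rw [← ha.2]; simp
    · intro a ha
      simp only [D, Finset.mem_filter] at ha
      rw [← ha.2]; simp
    · intro a ha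
      simp only [Finset.mem_filter, Bool.not_eq_false] at ha
      have hupd : Function.update (Function.update a ⟨0, hℓ⟩ false) ⟨0, hℓ⟩ true = a := by
        rw [← ha.2]; simp
      rw [hupd]
      have hs : s ℓ hℓ a = -1 := by unfold s; rw [ha.2]; simp
      have hFa : F (Function.update a ⟨0, hℓ⟩ false) = F a := hF a false
      rw [hs, hFa]
      split <;> ring
  have hD : (univ.filter fun x : Fin ℓ → Bool => x ⟨0, hℓ⟩ = false) = D ℓ hℓ := rfl
  rw [h2, hD, ← Finset.sum_add_distrib]
  refine Finset.sum_congr rfl fun w hw => ?_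
  simp only [D, Finset.mem_filter] at hw
  have hupd : Function.update w ⟨0, hℓ⟩ false = w := by rw [← hw.2]; simp
  have hs : s ℓ hℓ w = 1 := by unfold s; rw [hw.2]; simp
  unfold G
  rw [hupd, hs]
  split <;> split <;> ring

end Stmt8Aux

namespace Stmt8Aux

variable (ℓ : ℕ) (hℓ : 0 < ℓ)

lemma G_sq_le (C : Finset (Fin ℓ → Bool)) (w : Fin ℓ → Bool) :
    (G ℓ hℓ C w) ^ 2 ≤ 1 := by
  unfold G; split <;> split <;> norm_num

lemma eq_of_tail {v w : Fin ℓ → Bool} (hv : v ∈ D ℓ hℓ) (hw : w ∈ D ℓ hℓ)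
    (h : ∀ i : Fin ℓ, 1 ≤ (i : ℕ) → v i = w i) : v = w := by
  simp only [D, Finset.mem_filter] at hv hw
  funext i
  by_cases h1 : 1 ≤ (i : ℕ)
  · exact h i h1
  · have : i = (⟨0, hℓ⟩ : Fin ℓ) := Fin.ext (by simp only [Fin.val_mk] at *; omega)
    rw [this, hv.2, hw.2]

lemma chi_pow (x y : Fin ℓ → Bool) :
    χ ℓ x y = (-1 : ℝ) ^ (∑ i ∈ univ.filter (fun i : Fin ℓ => 1 ≤ (i : ℕ)),
      (x i).toNat * (y i).toNat) := by
  unfold χ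
  rw [← Finset.prod_pow_eq_pow_sum, Finset.prod_filter]
  refine Finset.prod_congr rfl fun i _ => ?_
  by_cases h1 : 1 ≤ (i : ℕ) <;> cases hx : x i <;> cases hy : y i <;> simp [h1, hx, hy]

lemma sign_eq (x y : Fin ℓ → Bool) :
    (if gl ℓ hℓ x y = true then (-1 : ℝ) else 1) = s ℓ hℓ x * s ℓ hℓ y * χ ℓ x y := by
  rw [chi_pow]
  unfold s gl
  rw [← pow_add, ← pow_add]
  set n := (x ⟨0, hℓ⟩).toNat + (y ⟨0, hℓ⟩).toNat +
    ∑ i ∈ univ.filter (fun i : Fin ℓ => 1 ≤ (i : ℕ)), (x i).toNat * (y i).toNat with hn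
  rcases Nat.even_or_odd n with he | ho
  · rw [if_neg, he.neg_one_pow]
    simp [Nat.even_iff.mp he]
  · rw [if_pos, ho.neg_one_pow]
    simp [Nat.odd_iff.mp ho]

end Stmt8Aux

open Stmt8Aux

/-- For every integer `ℓ ≥ 1`, the discrepancy of `g_ℓ` on every combinatorial
rectangle is at most `2^{-(ℓ+3)/2}`; that is, `disc(g_ℓ) ≤ 2^{-(ℓ+3)/2}`. -/
theorem stmt8 (ℓ : ℕ) (hℓ : 0 < ℓ) :
    ∀ A B : Finset (Fin ℓ → Bool),
      discR (gl ℓ hℓ) A B ≤ (2 : ℝ) ^ (-(((ℓ : ℝ) + 3) / 2)) := by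
  obtain ⟨k, rfl⟩ : ∃ k, ℓ = k + 1 := ⟨ℓ - 1, by omega⟩
  intro A B
  classical
  set T : (Fin (k+1) → Bool) → ℝ :=
    fun x => ∑ w ∈ D (k+1) hℓ, G (k+1) hℓ B w * χ (k+1) x w with hT
  set S : ℝ := ∑ v ∈ D (k+1) hℓ, G (k+1) hℓ A v * T v with hS
  -- the signed sum equals the filtered-card difference
  have e1 : ∑ p ∈ A ×ˢ B, (if gl (k+1) hℓ p.1 p.2 = true then (-1:ℝ) else 1)
      = ((((A ×ˢ B).filter fun p => gl (k+1) hℓ p.1 p.2 = false).card : ℝ) -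
        (((A ×ˢ B).filter fun p => gl (k+1) hℓ p.1 p.2 = true).card : ℝ)) := by
    rw [Finset.sum_ite, Finset.sum_const, Finset.sum_const]
    have hfilter : (A ×ˢ B).filter (fun p => ¬ gl (k+1) hℓ p.1 p.2 = true)
        = (A ×ˢ B).filter (fun p => gl (k+1) hℓ p.1 p.2 = false) := by
      apply Finset.filter_congr; intro p _; simp
    rw [hfilter]
    simp [nsmul_eq_mul]
    ring
  have e2 : ∑ p ∈ A ×ˢ B, (if gl (k+1) hℓ p.1 p.2 = true then (-1:ℝ) else 1)
      = ∑ x ∈ A, s (k+1) hℓ x * (∑ y ∈ B, s (k+1) hℓ y * χ (k+1) x y) := by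
    rw [Finset.sum_product]
    refine Finset.sum_congr rfl fun x _ => ?_
    rw [Finset.mul_sum]
    refine Finset.sum_congr rfl fun y _ => ?_
    rw [sign_eq (k+1) hℓ x y]
    ring
  have e3 : ∀ x, ∑ y ∈ B, s (k+1) hℓ y * χ (k+1) x y = T x := by
    intro x
    have := collapse (k+1) hℓ B (fun y => χ (k+1) x y)
      (fun y b => χ_update_right (k+1) hℓ x y b)
    simpa [hT] using this
  have e4 : ∀ x b, T (Function.update x ⟨0, hℓ⟩ b) = T x := by
    intro x b
    simp only [hT]
    refine Finset.sum_congr rfl fun w _ => ?_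
    rw [χ_update_left]
  have e5 : ∑ x ∈ A, s (k+1) hℓ x * T x = S := by
    rw [hS]; exact collapse (k+1) hℓ A T e4
  have hnum : ((((A ×ˢ B).filter fun p => gl (k+1) hℓ p.1 p.2 = false).card : ℝ) -
      (((A ×ˢ B).filter fun p => gl (k+1) hℓ p.1 p.2 = true).card : ℝ)) = S := by
    calc _ = ∑ p ∈ A ×ˢ B, (if gl (k+1) hℓ p.1 p.2 = true then (-1:ℝ) else 1) := e1.symm
      _ = ∑ x ∈ A, s (k+1) hℓ x * (∑ y ∈ B, s (k+1) hℓ y * χ (k+1) x y) := e2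
      _ = ∑ x ∈ A, s (k+1) hℓ x * T x := Finset.sum_congr rfl fun x _ => by rw [e3 x]
      _ = S := e5
  -- cardinality of D
  have hcardD : ((D (k+1) hℓ).card : ℝ) = 2 ^ k := by
    have h2c := two_card_D (k+1) hℓ
    rw [pow_succ'] at h2c
    have := Nat.eq_of_mul_eq_mul_left (by norm_num : 0 < 2) h2c
    rw [this]
    push_cast
    ring
  -- Cauchy–Schwarz
  have hCS : S ^ 2 ≤ (∑ v ∈ D (k+1) hℓ, (G (k+1) hℓ A v) ^ 2)
      * (∑ v ∈ D (k+1) hℓ, (T v) ^ 2) := by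
    rw [hS]
    exact Finset.sum_mul_sq_le_sq_mul_sq _ _ _
  have hGA : ∑ v ∈ D (k+1) hℓ, (G (k+1) hℓ A v) ^ 2 ≤ (2:ℝ) ^ k := by
    calc ∑ v ∈ D (k+1) hℓ, (G (k+1) hℓ A v) ^ 2 ≤ ∑ v ∈ D (k+1) hℓ, 1 :=
          Finset.sum_le_sum fun v _ => G_sq_le (k+1) hℓ A v
      _ = ((D (k+1) hℓ).card : ℝ) := by rw [Finset.sum_const, nsmul_eq_mul, mul_one]
      _ = (2:ℝ) ^ k := hcardD
  have hTsum : ∑ v ∈ D (k+1) hℓ, (T v) ^ 2 ≤ (2:ℝ) ^ k * (2:ℝ) ^ k := by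
    have expand : ∑ v ∈ D (k+1) hℓ, (T v) ^ 2
        = ∑ w ∈ D (k+1) hℓ, ∑ w' ∈ D (k+1) hℓ,
            (G (k+1) hℓ B w * G (k+1) hℓ B w') *
              (∑ v ∈ D (k+1) hℓ, χ (k+1) v w * χ (k+1) v w') := by
      calc ∑ v ∈ D (k+1) hℓ, (T v) ^ 2
          = ∑ v ∈ D (k+1) hℓ, ∑ w ∈ D (k+1) hℓ, ∑ w' ∈ D (k+1) hℓ,
              (G (k+1) hℓ B w * χ (k+1) v w) * (G (k+1) hℓ B w' * χ (k+1) v w') := by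
            refine Finset.sum_congr rfl fun v _ => ?_
            rw [hT]; dsimp only
            rw [sq, Finset.sum_mul_sum]
        _ = ∑ w ∈ D (k+1) hℓ, ∑ w' ∈ D (k+1) hℓ, ∑ v ∈ D (k+1) hℓ,
              (G (k+1) hℓ B w * χ (k+1) v w) * (G (k+1) hℓ B w' * χ (k+1) v w') := by
            rw [Finset.sum_comm]
            exact Finset.sum_congr rfl fun w _ => Finset.sum_comm
        _ = _ := by
            refine Finset.sum_congr rfl fun w _ => Finset.sum_congr rfl fun w' _ => ?_
            rw [Finset.mul_sum]
            exact Finset.sum_congr rfl fun v _ => by ring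
    have horth : ∀ w ∈ D (k+1) hℓ, ∀ w' ∈ D (k+1) hℓ,
        (G (k+1) hℓ B w * G (k+1) hℓ B w') *
          (∑ v ∈ D (k+1) hℓ, χ (k+1) v w * χ (k+1) v w')
        = if w' = w then (G (k+1) hℓ B w) ^ 2 * (2:ℝ) ^ k else 0 := by
      intro w hw w' hw'
      rw [orth (k+1) hℓ w w']
      by_cases he : w' = w
      · subst he
        rw [if_pos (fun i _ => rfl), if_pos rfl]
        norm_num [sq]
      · rw [if_neg fun hcond => he (eq_of_tail (k+1) hℓ hw hw' hcond).symm, if_neg he]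
        ring
    calc ∑ v ∈ D (k+1) hℓ, (T v) ^ 2
        = ∑ w ∈ D (k+1) hℓ, ∑ w' ∈ D (k+1) hℓ,
            (if w' = w then (G (k+1) hℓ B w) ^ 2 * (2:ℝ) ^ k else 0) := by
          rw [expand]
          exact Finset.sum_congr rfl fun w hw => Finset.sum_congr rfl
            fun w' hw' => horth w hw w' hw'
      _ = ∑ w ∈ D (k+1) hℓ, (G (k+1) hℓ B w) ^ 2 * (2:ℝ) ^ k := by
          refine Finset.sum_congr rfl fun w hw => ?_
          rw [Finset.sum_ite_eq' (D (k+1) hℓ) w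
            (fun _ => (G (k+1) hℓ B w) ^ 2 * (2:ℝ) ^ k), if_pos hw]
      _ ≤ ∑ w ∈ D (k+1) hℓ, 1 * (2:ℝ) ^ k := by
          refine Finset.sum_le_sum fun w _ => ?_
          exact mul_le_mul_of_nonneg_right (G_sq_le (k+1) hℓ B w) (by positivity)
      _ = (2:ℝ) ^ k * (2:ℝ) ^ k := by
          rw [Finset.sum_const, nsmul_eq_mul, hcardD]
          ring
  have hS2 : S ^ 2 ≤ ((2:ℝ) ^ k) ^ 3 := by
    have hTnn : (0:ℝ) ≤ ∑ v ∈ D (k+1) hℓ, (T v) ^ 2 :=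
      Finset.sum_nonneg fun v _ => sq_nonneg _
    calc S ^ 2 ≤ (∑ v ∈ D (k+1) hℓ, (G (k+1) hℓ A v) ^ 2)
        * (∑ v ∈ D (k+1) hℓ, (T v) ^ 2) := hCS
      _ ≤ (2:ℝ) ^ k * ((2:ℝ) ^ k * (2:ℝ) ^ k) :=
          mul_le_mul hGA hTsum hTnn (by positivity)
      _ = ((2:ℝ) ^ k) ^ 3 := by ring
  -- |S| ≤ 2 ^ (3k/2)
  have key : ((2:ℝ) ^ ((3*(k:ℝ))/2)) ^ 2 = ((2:ℝ) ^ k) ^ 3 := by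
    rw [← Real.rpow_natCast ((2:ℝ) ^ ((3*(k:ℝ))/2)) 2,
      ← Real.rpow_mul (by norm_num : (0:ℝ) ≤ 2), ← pow_mul,
      ← Real.rpow_natCast 2 (k*3)]
    congr 1
    push_cast
    ring
  have h0 : (0:ℝ) ≤ (2:ℝ) ^ ((3*(k:ℝ))/2) := Real.rpow_nonneg (by norm_num) _
  have habs : |S| ≤ (2:ℝ) ^ ((3*(k:ℝ))/2) := by
    calc |S| = Real.sqrt (S ^ 2) := (Real.sqrt_sq_eq_abs S).symm
      _ ≤ Real.sqrt (((2:ℝ) ^ ((3*(k:ℝ))/2)) ^ 2) :=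
          Real.sqrt_le_sqrt (by rw [key]; exact hS2)
      _ = (2:ℝ) ^ ((3*(k:ℝ))/2) := Real.sqrt_sq h0
  -- final arithmetic
  unfold discR
  rw [hnum]
  have hN : (Fintype.card (Fin (k+1) → Bool) : ℝ) = (2:ℝ) ^ (k+1) := by
    simp [Fintype.card_fun]
  rw [hN]
  have hpos : (0:ℝ) < (2:ℝ) ^ (k+1) * (2:ℝ) ^ (k+1) := by positivity
  rw [div_le_iff₀ hpos]
  refine habs.trans (le_of_eq ?_)
  rw [show ((2:ℝ) ^ (k+1) : ℝ) = (2:ℝ) ^ (((k+1:ℕ)):ℝ) from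
      (Real.rpow_natCast 2 (k+1)).symm,
    ← Real.rpow_add (by norm_num : (0:ℝ) < 2),
    ← Real.rpow_add (by norm_num : (0:ℝ) < 2)]
  congr 1
  push_cast
  ring
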